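/- Let k ≥ 2 and let A ⊆ [k]^m be a set containing no combinatorial line, and let B = A ∩ [k−1]^m. For each j ≤ k−1 let C_j = {x ∈ [k]^m : x^{k→j} ∈ B}, where x^{k→j} is the string obtained from x by changing every coordinate equal to k into j. Then each C_j is a jk-insensitive set, and A ∩ C_1 ∩ … ∩ C_{k−1} ⊆ [k−1]^m. -/
import Mathlib


open Finset

/-- The point of a combinatorial line (with wildcard set `W` and fixed values `x`)
obtained by setting all wildcard coordinates equal to `j`. -/
def linePt {m k : ℕ} (W : Finset (Fin m)) (x : Fin m → Fin k) (j : Fin k) :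
    Fin m → Fin k :=
  fun i => if i ∈ W then j else x i

/-- `A ⊆ [k]^m` contains a combinatorial line. -/
def HasLine {m k : ℕ} (A : Finset (Fin m → Fin k)) : Prop :=
  ∃ (W : Finset (Fin m)) (x : Fin m → Fin k),
    W.Nonempty ∧ ∀ j : Fin k, linePt W x j ∈ A

/-- `chgTo top j x` is the string `x^{k→j}` obtained from `x` by changing every
coordinate equal to `top` (the value `k`) into `j`. -/
def chgTo {m k : ℕ} (top j : Fin k) (x : Fin m → Fin k) : Fin m → Fin k :=
  fun i => if x i = top then j else x i

/-- `S` is `jk`-insensitive: membership in `S` depends only on `x^{k→j}`. -/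
def Insensitive {m k : ℕ} (top j : Fin k) (S : Finset (Fin m → Fin k)) : Prop :=
  ∀ x y : Fin m → Fin k, chgTo top j x = chgTo top j y → (x ∈ S ↔ y ∈ S)

/-- Let `A ⊆ [k]^m` contain no combinatorial line and let `B = A ∩ [k−1]^m`
(the members of `A` with no coordinate equal to the top value `k`).  For each
`j ≤ k−1` let `C_j = {x : x^{k→j} ∈ B}`.  Then each `C_j` is `jk`-insensitive and
`A ∩ C_1 ∩ … ∩ C_{k−1} ⊆ [k−1]^m`. -/
theorem insensitive_sets_disjoint_from_line_free (k m : ℕ) (hk : 2 ≤ k)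
    (A : Finset (Fin m → Fin k)) (hA : ¬ HasLine A)
    (top : Fin k) (htop : (top : ℕ) = k - 1)
    (B : Finset (Fin m → Fin k)) (hB : B = A.filter fun x => ∀ i, x i ≠ top)
    (C : Fin k → Finset (Fin m → Fin k))
    (hC : ∀ j, C j = Finset.univ.filter fun x => chgTo top j x ∈ B) :
    (∀ j, j ≠ top → Insensitive top j (C j)) ∧
    ∀ x ∈ A, (∀ j, j ≠ top → x ∈ C j) → ∀ i, x i ≠ top := by
  constructor
  · intro j _ x y hxy
    simp [hC, hxy]
  · intro x hxA hxC i hxi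
    apply hA
    refine ⟨Finset.univ.filter (fun i => x i = top), x, ⟨i, by simp [hxi]⟩, ?_⟩
    intro j
    have hlp : linePt (Finset.univ.filter (fun i => x i = top)) x j = chgTo top j x := by
      funext i'
      simp [linePt, chgTo]
    rw [hlp]
    by_cases hj : j = top
    · have : chgTo top j x = x := by
        funext i'
        simp only [chgTo, hj]
        split <;> simp_all
      rwa [this]
    · have := hxC j hj
      rw [hC j, Finset.mem_filter, hB, Finset.mem_filter] at this
      exact this.2.1
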